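/- Under the gaps-and-weight setup, assume that G_j is nonempty for every j = 1, …, n. Then there exists a unique n-tuple (p_1, …, p_n) of real polynomials, each of degree at most n − 1, such that I_j(p_k) = δ_{jk} for all j, k = 1, …, n. Equivalently, there exists a unique basis ω̃_1, …, ω̃_n of holomorphic differentials ω̃_k = p_k(λ)dλ/w normalized by ∫_{α̃_j} ω̃_k = δ_{jk} over the curves α̃_j determined by the divisor trajectories. -/

import Mathlib

open Finset

/-- The weight `w(t) = √(−∏_{i=0}^{2n}(t − bᵢ))` on the gaps of the hyperelliptic curve. -/
noncomputable def gapWeight (n : ℕ) (b : Fin (2 * n + 1) → ℝ) (t : ℝ) : ℝ :=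
  Real.sqrt (-∏ i, (t - b i))

/-- The signed integral `I_j(f) = ε_j · Σ_{(c,d) ∈ G_j} ∫_c^d f(t)/w(t) dt` over the pieces
of the collection of paths `G_j` lying in gap `j`. -/
noncomputable def gapIntegral (n : ℕ) (b : Fin (2 * n + 1) → ℝ) (ε : Fin n → ℝ)
    (G : Fin n → List (ℝ × ℝ)) (j : Fin n) (f : ℝ → ℝ) : ℝ :=
  ε j * ((G j).map fun pr => ∫ t in pr.1..pr.2, f t / gapWeight n b t).sum

/-- index of left gap edge -/
def gi1 (n : ℕ) (j : Fin n) : Fin (2 * n + 1) := ⟨2 * j + 1, by have := j.isLt; omega⟩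
def gi2 (n : ℕ) (j : Fin n) : Fin (2 * n + 1) := ⟨2 * j + 2, by have := j.isLt; omega⟩

lemma gi1_lt_gi2 {n : ℕ} (j : Fin n) : gi1 n j < gi2 n j := by
  simp [gi1, gi2, Fin.lt_def]

/-- the set of remaining indices -/
def gS (n : ℕ) (j : Fin n) : Finset (Fin (2 * n + 1)) :=
  (Finset.univ.erase (gi1 n j)).erase (gi2 n j)

lemma gap_fact {n : ℕ} (b : Fin (2 * n + 1) → ℝ) (j : Fin n) (t : ℝ) :
    (-∏ i, (t - b i)) =
      (t - b (gi1 n j)) * (b (gi2 n j) - t) * ∏ i ∈ gS n j, (t - b i) := by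
  rw [← Finset.mul_prod_erase Finset.univ _ (Finset.mem_univ (gi1 n j)),
    ← Finset.mul_prod_erase (Finset.univ.erase (gi1 n j)) _
      (Finset.mem_erase.2 ⟨(gi1_lt_gi2 j).ne', Finset.mem_univ _⟩)]
  simp only [gS]
  ring

lemma gi2_val {n : ℕ} (j : Fin n) : ((gi2 n j) : ℕ) = 2 * (j : ℕ) + 2 := rfl
lemma gi1_val {n : ℕ} (j : Fin n) : ((gi1 n j) : ℕ) = 2 * (j : ℕ) + 1 := rfl

lemma gS_prod_pos {n : ℕ} {b : Fin (2 * n + 1) → ℝ} (hb : StrictMono b) (j : Fin n)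
    {t : ℝ} (h1 : b (gi1 n j) ≤ t) (h2 : t ≤ b (gi2 n j)) :
    0 < ∏ i ∈ gS n j, (t - b i) := by
  rw [← Finset.prod_filter_mul_prod_filter_not (gS n j)
    (fun i : Fin (2 * n + 1) => (i : ℕ) < 2 * j + 1)]
  have hj := j.isLt
  apply mul_pos
  · apply Finset.prod_pos
    intro i hi
    simp only [Finset.mem_filter] at hi
    have : b i < b (gi1 n j) := hb (by rw [Fin.lt_def, gi1_val]; exact hi.2)
    linarith
  · set s2 := (gS n j).filter (fun i : Fin (2 * n + 1) => ¬ (i : ℕ) < 2 * j + 1) with hs2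
    have hcardeq : s2 = Finset.Ioi (gi2 n j) := by
      ext i
      simp only [hs2, gS, Finset.mem_filter, Finset.mem_erase, Finset.mem_univ, and_true,
        Finset.mem_Ioi, Fin.lt_def, Ne, Fin.ext_iff, gi1_val, gi2_val]
      omega
    have hneg : ∀ i ∈ s2, 0 < b i - t := by
      intro i hi
      rw [hcardeq, Finset.mem_Ioi] at hi
      have : b (gi2 n j) < b i := hb hi
      linarith
    have hcard : Even s2.card := by
      rw [hcardeq, Fin.card_Ioi, gi2_val, Nat.even_iff]; omega
    have : ∏ i ∈ s2, (t - b i) = (-1 : ℝ) ^ s2.card * ∏ i ∈ s2, (b i - t) := by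
      rw [← Finset.prod_const, ← Finset.prod_mul_distrib]
      exact Finset.prod_congr rfl fun i _ => by ring
    rw [this, hcard.neg_one_pow, one_mul]
    exact Finset.prod_pos hneg

lemma gapWeight_pos {n : ℕ} {b : Fin (2 * n + 1) → ℝ} (hb : StrictMono b) (j : Fin n)
    {t : ℝ} (h1 : b (gi1 n j) < t) (h2 : t < b (gi2 n j)) :
    0 < gapWeight n b t := by
  unfold gapWeight
  rw [gap_fact b j]
  exact Real.sqrt_pos.2 (mul_pos (mul_pos (by linarith) (by linarith))
    (gS_prod_pos hb j h1.le h2.le))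

lemma gapWeight_continuous (n : ℕ) (b : Fin (2 * n + 1) → ℝ) : Continuous (gapWeight n b) :=
  Real.continuous_sqrt.comp
    ((continuous_finset_prod _ fun _ _ => continuous_id.sub continuous_const).neg)

lemma gapWeight_inv_integrable {n : ℕ} {b : Fin (2 * n + 1) → ℝ} (hb : StrictMono b) (j : Fin n) :
    IntervalIntegrable (fun t => (gapWeight n b t)⁻¹) MeasureTheory.volume
      (b (gi1 n j)) (b (gi2 n j)) := by
  set a₁ := b (gi1 n j) with ha₁
  set a₂ := b (gi2 n j) with ha₂
  have ha : a₁ < a₂ := hb (gi1_lt_gi2 j)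
  have hRcont : Continuous fun t => ∏ i ∈ gS n j, (t - b i) :=
    continuous_finset_prod _ fun _ _ => continuous_id.sub continuous_const
  obtain ⟨t₀, ht₀, hmin⟩ :=
    isCompact_Icc.exists_isMinOn (Set.nonempty_Icc.2 ha.le) hRcont.continuousOn
  set m := ∏ i ∈ gS n j, (t₀ - b i) with hm
  have hmpos : 0 < m := gS_prod_pos hb j ht₀.1 ht₀.2
  have hbound : ∀ t ∈ Set.Icc a₁ a₂, Real.sqrt ((t - a₁) * ((a₂ - t) * m)) ≤ gapWeight n b t := by
    intro t ht
    unfold gapWeight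
    rw [gap_fact b j]
    apply Real.sqrt_le_sqrt
    have h1 : 0 ≤ t - a₁ := by linarith [ht.1]
    have h2 : 0 ≤ a₂ - t := by linarith [ht.2]
    have h3 : m ≤ ∏ i ∈ gS n j, (t - b i) := hmin ht
    nlinarith [mul_nonneg (mul_nonneg h1 h2) (sub_nonneg.2 h3)]
  have hmeas : ∀ u v : ℝ, MeasureTheory.AEStronglyMeasurable (fun t => (gapWeight n b t)⁻¹)
      (MeasureTheory.volume.restrict (Set.uIoc u v)) :=
    fun u v => ((gapWeight_continuous n b).measurable.inv).aestronglyMeasurable.restrict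
  set mid := (a₁ + a₂) / 2 with hmid
  have hmid1 : a₁ < mid := by rw [hmid]; linarith
  have hmid2 : mid < a₂ := by rw [hmid]; linarith
  have hrpow : IntervalIntegrable (fun x : ℝ => x ^ (-(1/2) : ℝ)) MeasureTheory.volume
      0 (mid - a₁) := intervalIntegral.intervalIntegrable_rpow' (by norm_num)
  have half1 : IntervalIntegrable (fun t => (gapWeight n b t)⁻¹) MeasureTheory.volume a₁ mid := by
    have hrpow1 : IntervalIntegrable (fun x : ℝ => (x - a₁) ^ (-(1/2) : ℝ))
        MeasureTheory.volume a₁ mid := by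
      have := hrpow.comp_sub_right a₁
      simpa using this
    refine (hrpow1.const_mul ((Real.sqrt ((a₂ - mid) * m))⁻¹)).mono_fun' (hmeas a₁ mid) ?_
    rw [Filter.EventuallyLE, Set.uIoc_of_le hmid1.le,
      MeasureTheory.ae_restrict_iff' measurableSet_Ioc]
    filter_upwards with x hx
    obtain ⟨hx1, hx2⟩ := hx
    have hxI : x ∈ Set.Icc a₁ a₂ := ⟨hx1.le, hx2.trans hmid2.le⟩
    have hKpos : 0 < (a₂ - mid) * m := mul_pos (by linarith) hmpos
    have hApos : 0 < (x - a₁) * ((a₂ - mid) * m) := mul_pos (by linarith) hKpos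
    have hAB : Real.sqrt ((x - a₁) * ((a₂ - mid) * m)) ≤ gapWeight n b x := by
      refine le_trans (Real.sqrt_le_sqrt ?_) (hbound x hxI)
      have : a₂ - mid ≤ a₂ - x := by linarith
      nlinarith
    have hnorm : ‖(gapWeight n b x)⁻¹‖ = (gapWeight n b x)⁻¹ :=
      Real.norm_of_nonneg (inv_nonneg.2 (Real.sqrt_nonneg _))
    rw [hnorm]
    calc (gapWeight n b x)⁻¹ ≤ (Real.sqrt ((x - a₁) * ((a₂ - mid) * m)))⁻¹ := by
          apply inv_anti₀ (Real.sqrt_pos.2 hApos) hAB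
      _ = (Real.sqrt ((a₂ - mid) * m))⁻¹ * (x - a₁) ^ (-(1/2) : ℝ) := by
          rw [Real.sqrt_mul (by linarith : (0:ℝ) ≤ x - a₁), mul_inv, mul_comm]
          congr 1
          rw [Real.sqrt_eq_rpow, ← Real.rpow_neg (by linarith : (0:ℝ) ≤ x - a₁)]
  have half2 : IntervalIntegrable (fun t => (gapWeight n b t)⁻¹) MeasureTheory.volume mid a₂ := by
    have hrpow0 : IntervalIntegrable (fun x : ℝ => x ^ (-(1/2) : ℝ)) MeasureTheory.volume
        0 (a₂ - mid) := intervalIntegral.intervalIntegrable_rpow' (by norm_num)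
    have hrpow2 : IntervalIntegrable (fun x : ℝ => (a₂ - x) ^ (-(1/2) : ℝ))
        MeasureTheory.volume mid a₂ := by
      have := (hrpow0.comp_sub_left a₂).symm
      simpa using this
    refine (hrpow2.const_mul ((Real.sqrt ((mid - a₁) * m))⁻¹)).mono_fun' (hmeas mid a₂) ?_
    rw [Filter.EventuallyLE, Set.uIoc_of_le hmid2.le,
      MeasureTheory.ae_restrict_iff' measurableSet_Ioc]
    filter_upwards with x hx
    obtain ⟨hx1, hx2⟩ := hx
    have hxI : x ∈ Set.Icc a₁ a₂ := ⟨(hmid1.trans hx1).le, hx2⟩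
    have hKpos : 0 < (mid - a₁) * m := mul_pos (by linarith) hmpos
    rcases eq_or_lt_of_le hx2 with heq | hlt
    · have hw0 : gapWeight n b x = 0 := by
        unfold gapWeight
        rw [gap_fact b j, heq]
        simp [ha₂]
      rw [hw0, heq, inv_zero, norm_zero]
      rw [show (a₂ - a₂ : ℝ) = 0 by ring, Real.zero_rpow (by norm_num), mul_zero]
    · have hApos : 0 < (a₂ - x) * ((mid - a₁) * m) := mul_pos (by linarith) hKpos
      have hAB : Real.sqrt ((a₂ - x) * ((mid - a₁) * m)) ≤ gapWeight n b x := by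
        refine le_trans (Real.sqrt_le_sqrt ?_) (hbound x hxI)
        have h1 : mid - a₁ ≤ x - a₁ := by linarith
        nlinarith
      have hnorm : ‖(gapWeight n b x)⁻¹‖ = (gapWeight n b x)⁻¹ :=
        Real.norm_of_nonneg (inv_nonneg.2 (Real.sqrt_nonneg _))
      rw [hnorm]
      calc (gapWeight n b x)⁻¹ ≤ (Real.sqrt ((a₂ - x) * ((mid - a₁) * m)))⁻¹ := by
            apply inv_anti₀ (Real.sqrt_pos.2 hApos) hAB
        _ = (Real.sqrt ((mid - a₁) * m))⁻¹ * (a₂ - x) ^ (-(1/2) : ℝ) := by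
            rw [Real.sqrt_mul (by linarith : (0:ℝ) ≤ a₂ - x), mul_inv, mul_comm]
            congr 1
            rw [Real.sqrt_eq_rpow, ← Real.rpow_neg (by linarith : (0:ℝ) ≤ a₂ - x)]
  exact half1.trans half2

lemma gapWeight_edge_zero {n : ℕ} (b : Fin (2 * n + 1) → ℝ) (j : Fin n) :
    gapWeight n b (b (gi1 n j)) = 0 ∧ gapWeight n b (b (gi2 n j)) = 0 := by
  constructor <;> (unfold gapWeight; rw [gap_fact b j]; simp)

lemma poly_div_integrable {n : ℕ} {b : Fin (2 * n + 1) → ℝ} (hb : StrictMono b) (j : Fin n)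
    (p : Polynomial ℝ) {c d : ℝ} (hc : b (gi1 n j) ≤ c) (hd : d ≤ b (gi2 n j)) (hcd : c ≤ d) :
    IntervalIntegrable (fun t => Polynomial.eval t p / gapWeight n b t)
      MeasureTheory.volume c d := by
  have ha : b (gi1 n j) ≤ b (gi2 n j) := (hb (gi1_lt_gi2 j)).le
  have hsub : Set.uIcc c d ⊆ Set.uIcc (b (gi1 n j)) (b (gi2 n j)) := by
    rw [Set.uIcc_of_le hcd, Set.uIcc_of_le ha]
    exact Set.Icc_subset_Icc hc hd
  have h := ((gapWeight_inv_integrable hb j).mono_set hsub).continuousOn_mul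
    (p.continuous.continuousOn)
  simpa [div_eq_mul_inv] using h

lemma gapIntegral_add {n : ℕ} {b : Fin (2 * n + 1) → ℝ} (ε : Fin n → ℝ)
    (G : Fin n → List (ℝ × ℝ)) (j : Fin n) (f g : ℝ → ℝ)
    (hf : ∀ pr ∈ G j, IntervalIntegrable (fun t => f t / gapWeight n b t)
      MeasureTheory.volume pr.1 pr.2)
    (hg : ∀ pr ∈ G j, IntervalIntegrable (fun t => g t / gapWeight n b t)
      MeasureTheory.volume pr.1 pr.2) :
    gapIntegral n b ε G j (fun t => f t + g t) =
      gapIntegral n b ε G j f + gapIntegral n b ε G j g := by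
  unfold gapIntegral
  rw [← mul_add]
  congr 1
  have key : ∀ l : List (ℝ × ℝ),
      (∀ pr ∈ l, IntervalIntegrable (fun t => f t / gapWeight n b t)
        MeasureTheory.volume pr.1 pr.2) →
      (∀ pr ∈ l, IntervalIntegrable (fun t => g t / gapWeight n b t)
        MeasureTheory.volume pr.1 pr.2) →
      (l.map fun pr => ∫ t in pr.1..pr.2, (f t + g t) / gapWeight n b t).sum =
        (l.map fun pr => ∫ t in pr.1..pr.2, f t / gapWeight n b t).sum +
          (l.map fun pr => ∫ t in pr.1..pr.2, g t / gapWeight n b t).sum := by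
    intro l
    induction l with
    | nil => simp
    | cons hd tl ih =>
      intro hf' hg'
      simp only [List.map_cons, List.sum_cons]
      rw [ih (fun pr hpr => hf' pr (List.mem_cons_of_mem hd hpr))
        (fun pr hpr => hg' pr (List.mem_cons_of_mem hd hpr))]
      have : (∫ t in hd.1..hd.2, (f t + g t) / gapWeight n b t) =
          (∫ t in hd.1..hd.2, f t / gapWeight n b t) +
            ∫ t in hd.1..hd.2, g t / gapWeight n b t := by
        rw [← intervalIntegral.integral_add (hf' hd (List.mem_cons_self))
          (hg' hd (List.mem_cons_self))]
        apply intervalIntegral.integral_congr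
        intro t _
        simp [add_div]
      rw [this]
      ring
  exact key (G j) hf hg

lemma gapIntegral_smul {n : ℕ} {b : Fin (2 * n + 1) → ℝ} (ε : Fin n → ℝ)
    (G : Fin n → List (ℝ × ℝ)) (j : Fin n) (f : ℝ → ℝ) (c : ℝ) :
    gapIntegral n b ε G j (fun t => c * f t) = c * gapIntegral n b ε G j f := by
  unfold gapIntegral
  have key : ∀ l : List (ℝ × ℝ),
      (l.map fun pr => ∫ t in pr.1..pr.2, (c * f t) / gapWeight n b t).sum =
        c * (l.map fun pr => ∫ t in pr.1..pr.2, f t / gapWeight n b t).sum := by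
    intro l
    induction l with
    | nil => simp
    | cons hd tl ih =>
      simp only [List.map_cons, List.sum_cons, ih, mul_add]
      congr 1
      rw [← intervalIntegral.integral_const_mul]
      apply intervalIntegral.integral_congr
      intro t _
      ring
  rw [key]
  ring

lemma gapIntegral_ne_zero {n : ℕ} {b : Fin (2 * n + 1) → ℝ} (hb : StrictMono b)
    {ε : Fin n → ℝ} (hε : ∀ j, ε j = 1 ∨ ε j = -1) {G : Fin n → List (ℝ × ℝ)} (j : Fin n)
    (hG : ∀ pr ∈ G j, b (gi1 n j) ≤ pr.1 ∧ pr.1 < pr.2 ∧ pr.2 ≤ b (gi2 n j))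
    (hGne : G j ≠ []) (p : Polynomial ℝ)
    (hp : ∀ t ∈ Set.Ioo (b (gi1 n j)) (b (gi2 n j)), 0 < Polynomial.eval t p) :
    gapIntegral n b ε G j (fun t => Polynomial.eval t p) ≠ 0 := by
  unfold gapIntegral
  apply mul_ne_zero
  · rcases hε j with h | h <;> rw [h] <;> norm_num
  · have hterm : ∀ pr ∈ G j, 0 ≤ ∫ t in pr.1..pr.2, Polynomial.eval t p / gapWeight n b t := by
      intro pr hpr
      obtain ⟨h1, h2, h3⟩ := hG pr hpr
      apply intervalIntegral.integral_nonneg h2.le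
      intro u hu
      by_cases hwu : gapWeight n b u = 0
      · rw [hwu, div_zero]
      · have hu1 : b (gi1 n j) ≤ u := h1.trans hu.1
        have hu2 : u ≤ b (gi2 n j) := hu.2.trans h3
        have hne1 : u ≠ b (gi1 n j) := by
          rintro rfl; exact hwu (gapWeight_edge_zero b j).1
        have hne2 : u ≠ b (gi2 n j) := by
          rintro rfl; exact hwu (gapWeight_edge_zero b j).2
        exact div_nonneg (hp u ⟨lt_of_le_of_ne hu1 (Ne.symm hne1),
          lt_of_le_of_ne hu2 hne2⟩).le (Real.sqrt_nonneg _)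
    obtain ⟨hd, tl, hGeq⟩ := List.exists_cons_of_ne_nil hGne
    obtain ⟨h1, h2, h3⟩ := hG hd (by rw [hGeq]; exact List.mem_cons_self)
    have hhead : 0 < ∫ t in hd.1..hd.2, Polynomial.eval t p / gapWeight n b t := by
      apply intervalIntegral.intervalIntegral_pos_of_pos_on
        (poly_div_integrable hb j p h1 h3 h2.le)
      · intro x hx
        have hx1 : b (gi1 n j) < x := lt_of_le_of_lt h1 hx.1
        have hx2 : x < b (gi2 n j) := lt_of_lt_of_le hx.2 h3
        exact div_pos (hp x ⟨hx1, hx2⟩) (gapWeight_pos hb j hx1 hx2)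
      · exact h2
    have : 0 < ((G j).map fun pr =>
        ∫ t in pr.1..pr.2, Polynomial.eval t p / gapWeight n b t).sum := by
      rw [hGeq]
      simp only [List.map_cons, List.sum_cons]
      apply add_pos_of_pos_of_nonneg hhead
      apply List.sum_nonneg
      intro x hx
      obtain ⟨pr, hpr, rfl⟩ := List.mem_map.1 hx
      exact hterm pr (by rw [hGeq]; exact List.mem_cons_of_mem hd hpr)
    exact this.ne'

lemma sign_const {a₁ a₂ : ℝ} (p : Polynomial ℝ)
    (hcon : ∀ x ∈ Set.Ioo a₁ a₂, Polynomial.eval x p ≠ 0)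
    {t₀ : ℝ} (ht₀ : t₀ ∈ Set.Ioo a₁ a₂) (hpos : 0 < Polynomial.eval t₀ p) :
    ∀ t ∈ Set.Ioo a₁ a₂, 0 < Polynomial.eval t p := by
  intro t ht
  rcases lt_trichotomy (Polynomial.eval t p) 0 with hneg | h0 | hpos'
  · exfalso
    have hc : ContinuousOn (fun x => Polynomial.eval x p) (Set.uIcc t t₀) :=
      p.continuous.continuousOn
    have h0m : (0 : ℝ) ∈ Set.uIcc (Polynomial.eval t p) (Polynomial.eval t₀ p) :=
      Set.mem_uIcc.2 (Or.inl ⟨hneg.le, hpos.le⟩)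
    obtain ⟨x, hx, hx0⟩ := intermediate_value_uIcc hc h0m
    refine hcon x ?_ hx0
    obtain ⟨ht1, ht2⟩ := ht
    obtain ⟨ht₀1, ht₀2⟩ := ht₀
    rcases Set.mem_uIcc.1 hx with ⟨h1, h2⟩ | ⟨h1, h2⟩ <;>
      exact ⟨by linarith, by linarith⟩
  · exact absurd h0 (hcon t ht)
  · exact hpos'

/-- Real-integral form of the paper's Proposition: if every `G_j` is nonempty, there is a
unique tuple of polynomials `p₁, …, pₙ` of degree at most `n − 1` (i.e. a unique basis
`ω̃_k = p_k(λ)dλ/w` of holomorphic differentials) normalized by `I_j(p_k) = δ_{jk}`. -/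
theorem unique_normalized_basis (n : ℕ) (hn : 1 ≤ n)
    (b : Fin (2 * n + 1) → ℝ) (hb0 : b 0 = 0) (hb : StrictMono b)
    (ε : Fin n → ℝ) (hε : ∀ j, ε j = 1 ∨ ε j = -1)
    (G : Fin n → List (ℝ × ℝ))
    (hG : ∀ j : Fin n, ∀ pr ∈ G j,
      b ⟨2 * (j : ℕ) + 1, by omega⟩ ≤ pr.1 ∧ pr.1 < pr.2 ∧
        pr.2 ≤ b ⟨2 * (j : ℕ) + 2, by omega⟩)
    (hGne : ∀ j : Fin n, G j ≠ []) :
    ∃! P : Fin n → Polynomial ℝ,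
      (∀ k, (P k).natDegree ≤ n - 1) ∧
      ∀ j k : Fin n, gapIntegral n b ε G j (fun t => (P k).eval t) =
        if j = k then 1 else 0 := by
  classical
  have hG' : ∀ j : Fin n, ∀ pr ∈ G j,
      b (gi1 n j) ≤ pr.1 ∧ pr.1 < pr.2 ∧ pr.2 ≤ b (gi2 n j) := fun j => hG j
  haveI : FiniteDimensional ℝ (Polynomial.degreeLT ℝ n) :=
    LinearEquiv.finiteDimensional (Polynomial.degreeLTEquiv ℝ n).symm
  -- the linear map
  let φ : Polynomial.degreeLT ℝ n →ₗ[ℝ] (Fin n → ℝ) :=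
    { toFun := fun p j => gapIntegral n b ε G j fun t => Polynomial.eval t (p : Polynomial ℝ)
      map_add' := by
        intro p q
        funext j
        simp only [Submodule.coe_add, Polynomial.eval_add, Pi.add_apply]
        exact gapIntegral_add ε G j _ _
          (fun pr hpr => poly_div_integrable hb j _ ((hG' j pr hpr).1)
            ((hG' j pr hpr).2.2) ((hG' j pr hpr).2.1.le))
          (fun pr hpr => poly_div_integrable hb j _ ((hG' j pr hpr).1)
            ((hG' j pr hpr).2.2) ((hG' j pr hpr).2.1.le))
      map_smul' := by
        intro c p
        funext j
        simp only [SetLike.val_smul, Polynomial.eval_smul, smul_eq_mul, RingHom.id_apply,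
          Pi.smul_apply]
        exact gapIntegral_smul ε G j _ c }
  have hφ_apply : ∀ (p : Polynomial.degreeLT ℝ n) (j : Fin n),
      φ p j = gapIntegral n b ε G j fun t => Polynomial.eval t (p : Polynomial ℝ) :=
    fun p j => rfl
  -- injectivity
  have hinj : Function.Injective φ := by
    rw [← LinearMap.ker_eq_bot, LinearMap.ker_eq_bot']
    intro p hp0
    by_cases hpz : (p : Polynomial ℝ) = 0
    · exact Subtype.ext hpz
    · exfalso
      have hroots : ∀ j : Fin n, ∃ x ∈ Set.Ioo (b (gi1 n j)) (b (gi2 n j)),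
          Polynomial.eval x (p : Polynomial ℝ) = 0 := by
        intro j
        by_contra hcon
        push_neg at hcon
        have hIj : gapIntegral n b ε G j (fun t => Polynomial.eval t (p : Polynomial ℝ)) = 0 := by
          rw [← hφ_apply p j, hp0]; rfl
        have ha : b (gi1 n j) < b (gi2 n j) := hb (gi1_lt_gi2 j)
        set t₀ := (b (gi1 n j) + b (gi2 n j)) / 2 with ht₀def
        have ht₀ : t₀ ∈ Set.Ioo (b (gi1 n j)) (b (gi2 n j)) :=
          ⟨by rw [ht₀def]; linarith, by rw [ht₀def]; linarith⟩
        rcases lt_trichotomy (Polynomial.eval t₀ (p : Polynomial ℝ)) 0 with hneg | h0 | hpos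
        · have hcon' : ∀ x ∈ Set.Ioo (b (gi1 n j)) (b (gi2 n j)),
              Polynomial.eval x (-(p : Polynomial ℝ)) ≠ 0 := by
            intro x hx
            simpa using hcon x hx
          have hposneg : 0 < Polynomial.eval t₀ (-(p : Polynomial ℝ)) := by
            simpa using hneg
          have hsgn := sign_const _ hcon' ht₀ hposneg
          refine gapIntegral_ne_zero hb hε j (hG' j) (hGne j) (-(p : Polynomial ℝ)) hsgn ?_
          have heq : (fun t => Polynomial.eval t (-(p : Polynomial ℝ))) =
              fun t => (-1 : ℝ) * Polynomial.eval t (p : Polynomial ℝ) := by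
            funext t; simp
          rw [heq, gapIntegral_smul, hIj, mul_zero]
        · exact hcon t₀ ht₀ h0
        · have hsgn := sign_const _ hcon ht₀ hpos
          exact gapIntegral_ne_zero hb hε j (hG' j) (hGne j) _ hsgn hIj
      choose x hxmem hxzero using hroots
      have hxinj : Function.Injective x := by
        have hmono : ∀ j k : Fin n, j < k → x j < x k := by
          intro j k hjk
          have h1 : x j < b (gi2 n j) := (hxmem j).2
          have h2 : b (gi1 n k) < x k := (hxmem k).1
          have h3 : b (gi2 n j) ≤ b (gi1 n k) := by
            apply hb.monotone
            rw [Fin.le_def, gi1_val, gi2_val]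
            have := Fin.lt_def.1 hjk
            omega
          linarith
        intro j k h
        rcases lt_trichotomy j k with hlt | heq | hgt
        · exact absurd h (hmono j k hlt).ne
        · exact heq
        · exact absurd h.symm (hmono k j hgt).ne
      have hdeglt : (p : Polynomial ℝ).natDegree < Fintype.card (Fin n) := by
        rw [Fintype.card_fin]
        exact (Polynomial.natDegree_lt_iff_degree_lt hpz).2 (Polynomial.mem_degreeLT.1 p.2)
      exact hpz (Polynomial.eq_zero_of_natDegree_lt_card_of_eval_eq_zero _ hxinj hxzero hdeglt)
  have hrank : Module.finrank ℝ (Polynomial.degreeLT ℝ n) = Module.finrank ℝ (Fin n → ℝ) :=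
    (Polynomial.degreeLTEquiv ℝ n).finrank_eq
  let ψ := LinearMap.linearEquivOfInjective φ hinj hrank
  have hψ : ∀ v : Fin n → ℝ, φ (ψ.symm v) = v := by
    intro v
    have h := ψ.apply_symm_apply v
    rwa [LinearMap.linearEquivOfInjective_apply] at h
  refine ⟨fun k => ((ψ.symm (Pi.single k 1) : Polynomial.degreeLT ℝ n) : Polynomial ℝ),
    ⟨?_, ?_⟩, ?_⟩
  · intro k
    show ((ψ.symm (Pi.single k 1) : Polynomial.degreeLT ℝ n) : Polynomial ℝ).natDegree ≤ n - 1
    set q := ((ψ.symm (Pi.single k 1) : Polynomial.degreeLT ℝ n) : Polynomial ℝ) with hq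
    by_cases hqz : q = 0
    · rw [hqz]; simp
    · have : q.natDegree < n := (Polynomial.natDegree_lt_iff_degree_lt hqz).2
        (Polynomial.mem_degreeLT.1 (ψ.symm (Pi.single k 1)).2)
      omega
  · intro j k
    have h1 := congrFun (hψ (Pi.single k 1)) j
    rw [hφ_apply] at h1
    rw [h1, Pi.single_apply]
  · intro Q hQ
    obtain ⟨hdeg, hnorm⟩ := hQ
    funext k
    have hQmem : Q k ∈ Polynomial.degreeLT ℝ n := by
      rw [Polynomial.mem_degreeLT]
      calc (Q k).degree ≤ ((Q k).natDegree : WithBot ℕ) := Polynomial.degree_le_natDegree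
        _ ≤ ((n - 1 : ℕ) : WithBot ℕ) := by exact_mod_cast hdeg k
        _ < (n : WithBot ℕ) := by exact_mod_cast Nat.sub_lt hn Nat.one_pos
    have hφQ : φ ⟨Q k, hQmem⟩ = Pi.single k 1 := by
      funext j
      rw [hφ_apply]
      rw [Pi.single_apply]
      exact hnorm j k
    have := hinj (hφQ.trans (hψ (Pi.single k 1)).symm)
    exact congrArg Subtype.val this
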